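/- Every irreducible PSL(2,ℂ)-representation of the free product ℤ/2 * ℤ/3 = ⟨c,d | c², d³⟩ is conjugate to one of the form ρ_z with ρ_z(c) = ±[[i,0],[0,-i]] and ρ_z(d) = ±[[z,1],[z(1-z)-1, 1-z]] for some z ∈ ℂ, and for such a representation, trace(ρ_z(cd))² = -(2z-1)², so the function χ ↦ trace²(cd) - 4 is a degree-2 polynomial function of z. -/

import Mathlib

open Matrix Complex

/-- `SL(2,ℂ)`. -/
abbrev SL2C := Matrix.SpecialLinearGroup (Fin 2) ℂ

/-- `PSL(2,ℂ)` as the quotient of `SL(2,ℂ)` by its center. -/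
abbrev PSL2C' := SL2C ⧸ Subgroup.center SL2C

/-- The projection `SL(2,ℂ) → PSL(2,ℂ)`. -/
noncomputable def projPSL : SL2C →* PSL2C' := QuotientGroup.mk' _

/-- Relations of the free product `ℤ/2 * ℤ/3 = ⟨c, d | c², d³⟩`. -/
def relsZ2Z3 : Set (FreeGroup (Fin 2)) :=
  {(FreeGroup.of 0) ^ 2, (FreeGroup.of 1) ^ 3}

/-- The matrix `[[i,0],[0,-i]]` as an element of `SL(2,ℂ)`. -/
noncomputable def Cel : SL2C :=
  ⟨!![Complex.I, 0; 0, -Complex.I], by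
    simp [Matrix.det_fin_two_of, Complex.I_mul_I]⟩

/-- The matrix `[[z,1],[z(1-z)-1, 1-z]]` as an element of `SL(2,ℂ)`. -/
noncomputable def Del (z : ℂ) : SL2C :=
  ⟨!![z, 1; z * (1 - z) - 1, 1 - z], by
    simp [Matrix.det_fin_two_of]⟩

/- ### Auxiliary lemmas -/

lemma entry_eq {A B : Matrix (Fin 2) (Fin 2) ℂ} (h : A = B) (i j : Fin 2) : A i j = B i j := by
  rw [h]

lemma center_iff (X : SL2C) :
    X ∈ Subgroup.center SL2C ↔ (X : Matrix (Fin 2) (Fin 2) ℂ) = 1 ∨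
      (X : Matrix (Fin 2) (Fin 2) ℂ) = -1 := by
  rw [Matrix.SpecialLinearGroup.mem_center_iff]
  constructor
  · rintro ⟨r, hr, hscal⟩
    have hr2 : r * r = 1 := by rw [← sq]; simpa using hr
    rcases mul_self_eq_one_iff.mp hr2 with h | h
    · left; rw [← hscal, h]; simp
    · right; rw [← hscal, h]
      ext i j; simp [Matrix.scalar_apply, Matrix.diagonal, Matrix.one_apply]; split <;> simp
  · rintro (h | h)
    · exact ⟨1, by simp, by simp [h]⟩
    · refine ⟨-1, by simp, ?_⟩
      rw [h]; ext i j
      simp [Matrix.scalar_apply, Matrix.diagonal, Matrix.one_apply]; split <;> simp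

lemma projPSL_eq_iff (X Y : SL2C) :
    projPSL X = projPSL Y ↔ (X : Matrix (Fin 2) (Fin 2) ℂ) = Y ∨
      (X : Matrix (Fin 2) (Fin 2) ℂ) = -(Y : Matrix (Fin 2) (Fin 2) ℂ) := by
  rw [show projPSL = QuotientGroup.mk' _ from rfl, QuotientGroup.mk'_eq_mk']
  constructor
  · rintro ⟨z, hz, hzX⟩
    rcases (center_iff z).mp hz with h | h
    · left
      have : X * z = Y := hzX
      rw [← this]; simp [Matrix.SpecialLinearGroup.coe_mul, h]
    · right
      have : X * z = Y := hzX
      rw [← this, Matrix.SpecialLinearGroup.coe_mul, h]; simp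
  · rintro (h | h)
    · exact ⟨1, Subgroup.one_mem _, by rw [mul_one]; exact Subtype.ext h⟩
    · refine ⟨X⁻¹ * Y, (center_iff _).mpr (Or.inr ?_), by group⟩
      have h2 : ((X⁻¹ * Y : SL2C) : Matrix (Fin 2) (Fin 2) ℂ)
          = (X⁻¹ : SL2C) * (Y : Matrix (Fin 2) (Fin 2) ℂ) := by simp
      rw [h2]
      have h3 : (Y : Matrix (Fin 2) (Fin 2) ℂ) = -(X : Matrix (Fin 2) (Fin 2) ℂ) := by
        rw [h]; simp
      rw [h3, mul_neg]
      have h4 : ((X⁻¹ : SL2C) : Matrix (Fin 2) (Fin 2) ℂ) * (X : Matrix (Fin 2) (Fin 2) ℂ) = 1 := by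
        rw [← Matrix.SpecialLinearGroup.coe_mul, inv_mul_cancel]; simp
      rw [h4]

lemma projPSL_eq_one_iff (X : SL2C) :
    projPSL X = 1 ↔ (X : Matrix (Fin 2) (Fin 2) ℂ) = 1 ∨
      (X : Matrix (Fin 2) (Fin 2) ℂ) = -1 := by
  simpa using projPSL_eq_iff X 1

lemma conj_comm_of_comm {G : Type*} [Group G] (q x y : G) (h : x * y = y * x) :
    (q*x*q⁻¹) * (q*y*q⁻¹) = (q*y*q⁻¹) * (q*x*q⁻¹) := by
  have h1 : q*x*q⁻¹*(q*y*q⁻¹) = q*(x*y)*q⁻¹ := by group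
  have h2 : q*y*q⁻¹*(q*x*q⁻¹) = q*(y*x)*q⁻¹ := by group
  rw [h1, h2, h]

lemma order_two_conj (C : SL2C) (h : (C : Matrix (Fin 2) (Fin 2) ℂ) * C = -1) :
    ∃ Q : SL2C, C = Q * Cel * Q⁻¹ := by
  obtain ⟨a, b, c, d, hM⟩ : ∃ a b c d, (C : Matrix (Fin 2) (Fin 2) ℂ) = !![a,b;c,d] :=
    ⟨_, _, _, _, Matrix.eta_fin_two _⟩
  have hdet : a * d - b * c = 1 := by
    have := C.2; rw [hM, Matrix.det_fin_two_of] at this; linear_combination this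
  rw [hM] at h
  have e00 : a*a + b*c = -1 := by
    have := entry_eq h 0 0; simp [Matrix.mul_apply, Fin.sum_univ_two] at this
    linear_combination this
  have e01 : b*(a+d) = 0 := by
    have := entry_eq h 0 1; simp [Matrix.mul_apply, Fin.sum_univ_two] at this
    linear_combination this
  have e10 : c*(a+d) = 0 := by
    have := entry_eq h 1 0; simp [Matrix.mul_apply, Fin.sum_univ_two] at this
    linear_combination this
  have e11 : d*d + b*c = -1 := by
    have := entry_eq h 1 1; simp [Matrix.mul_apply, Fin.sum_univ_two] at this
    linear_combination this
  have htr : a + d = 0 := by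
    by_contra htr
    have hb : b = 0 := by rcases mul_eq_zero.mp e01 with h' | h'; exact h'; exact absurd h' htr
    have hc : c = 0 := by rcases mul_eq_zero.mp e10 with h' | h'; exact h'; exact absurd h' htr
    apply htr
    have : (a+d)*(a+d) = 0 := by
      rw [hb, hc] at e00 e11 hdet; ring_nf; linear_combination e00 + e11 + 2*hdet
    exact pow_eq_zero_iff (n := 2) (by norm_num) |>.mp (by rw [sq]; exact this)
  have hd : d = -a := by linear_combination htr
  subst hd
  by_cases hb : b ≠ 0
  · have hbI : -(2*b*Complex.I) ≠ 0 := by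
      simp [Complex.I_ne_zero, hb]
    obtain ⟨k, hk1⟩ : ∃ k : ℂ, -(2*b*Complex.I) * k = 1 := ⟨_, mul_inv_cancel₀ hbI⟩
    have hdQ : (!![b, b*k; Complex.I - a, (-Complex.I - a)*k] : Matrix (Fin 2) (Fin 2) ℂ).det = 1 := by
      rw [Matrix.det_fin_two_of]
      linear_combination hk1
    set Q : SL2C := ⟨!![b, b*k; Complex.I - a, (-Complex.I - a)*k], hdQ⟩ with hQ
    have key : C * Q = Q * Cel := by
      apply Subtype.ext
      show (C : Matrix (Fin 2) (Fin 2) ℂ) * _ = _ * (Cel : Matrix (Fin 2) (Fin 2) ℂ)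
      rw [hM, hQ]
      show (!![a,b;c,-a] : Matrix (Fin 2) (Fin 2) ℂ) * _ = _ * !![Complex.I, 0; 0, -Complex.I]
      ext i j
      fin_cases i <;> fin_cases j
      · simp [Matrix.mul_apply, Fin.sum_univ_two]; ring
      · simp [Matrix.mul_apply, Fin.sum_univ_two]; ring
      · simp [Matrix.mul_apply, Fin.sum_univ_two]
        linear_combination e00 - Complex.I_sq
      · simp [Matrix.mul_apply, Fin.sum_univ_two]
        linear_combination k*e00 - k*Complex.I_sq
    refine ⟨Q, ?_⟩
    rw [← key]
    group
  · push_neg at hb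
    subst hb
    have ha2 : a * a = -1 := by linear_combination e00
    obtain ⟨w, hw⟩ : ∃ w : ℂ, (2*Complex.I) * w = 1 :=
      ⟨_, mul_inv_cancel₀ (by simp [Complex.I_ne_zero])⟩
    have ha : a = Complex.I ∨ a = -Complex.I := by
      have : (a - Complex.I) * (a + Complex.I) = 0 := by
        linear_combination ha2 - Complex.I_sq
      rcases mul_eq_zero.mp this with h' | h'
      · left; linear_combination h'
      · right; linear_combination h'
    rcases ha with ha | ha <;> subst ha
    · have hdQ : (!![1, 0; c*w, 1] : Matrix (Fin 2) (Fin 2) ℂ).det = 1 := by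
        simp [Matrix.det_fin_two_of]
      set Q : SL2C := ⟨!![1, 0; c*w, 1], hdQ⟩ with hQ
      have key : C * Q = Q * Cel := by
        apply Subtype.ext
        show (C : Matrix (Fin 2) (Fin 2) ℂ) * _ = _ * (Cel : Matrix (Fin 2) (Fin 2) ℂ)
        rw [hM, hQ]
        show (!![Complex.I,0;c,-Complex.I] : Matrix (Fin 2) (Fin 2) ℂ) * _
          = _ * !![Complex.I, 0; 0, -Complex.I]
        ext i j
        fin_cases i <;> fin_cases j
        · simp [Matrix.mul_apply, Fin.sum_univ_two]
        · simp [Matrix.mul_apply, Fin.sum_univ_two]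
        · simp [Matrix.mul_apply, Fin.sum_univ_two]
          linear_combination -c*hw
        · simp [Matrix.mul_apply, Fin.sum_univ_two]
      refine ⟨Q, ?_⟩
      rw [← key]
      group
    · have hdQ : (!![0, -1; 1, c*w] : Matrix (Fin 2) (Fin 2) ℂ).det = 1 := by
        simp [Matrix.det_fin_two_of]
      set Q : SL2C := ⟨!![0, -1; 1, c*w], hdQ⟩ with hQ
      have key : C * Q = Q * Cel := by
        apply Subtype.ext
        show (C : Matrix (Fin 2) (Fin 2) ℂ) * _ = _ * (Cel : Matrix (Fin 2) (Fin 2) ℂ)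
        rw [hM, hQ]
        show (!![-Complex.I,0;c,-(-Complex.I)] : Matrix (Fin 2) (Fin 2) ℂ) * _
          = _ * !![Complex.I, 0; 0, -Complex.I]
        ext i j
        fin_cases i <;> fin_cases j
        · simp [Matrix.mul_apply, Fin.sum_univ_two]
        · simp [Matrix.mul_apply, Fin.sum_univ_two]
        · simp [Matrix.mul_apply, Fin.sum_univ_two]
        · simp [Matrix.mul_apply, Fin.sum_univ_two]
          linear_combination c*hw
      refine ⟨Q, ?_⟩
      rw [← key]
      group

lemma sq_one (C : SL2C) (h : (C : Matrix (Fin 2) (Fin 2) ℂ) * C = 1) :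
    (C : Matrix (Fin 2) (Fin 2) ℂ) = 1 ∨ (C : Matrix (Fin 2) (Fin 2) ℂ) = -1 := by
  obtain ⟨a, b, c, d, hM⟩ : ∃ a b c d, (C : Matrix (Fin 2) (Fin 2) ℂ) = !![a,b;c,d] :=
    ⟨_, _, _, _, Matrix.eta_fin_two _⟩
  have hdet : a * d - b * c = 1 := by
    have := C.2; rw [hM, Matrix.det_fin_two_of] at this; linear_combination this
  rw [hM] at h
  have e00 : a*a + b*c = 1 := by
    have := entry_eq h 0 0; simp [Matrix.mul_apply, Fin.sum_univ_two, Matrix.one_apply] at this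
    linear_combination this
  have e01 : b*(a+d) = 0 := by
    have := entry_eq h 0 1; simp [Matrix.mul_apply, Fin.sum_univ_two, Matrix.one_apply] at this
    linear_combination this
  have e10 : c*(a+d) = 0 := by
    have := entry_eq h 1 0; simp [Matrix.mul_apply, Fin.sum_univ_two, Matrix.one_apply] at this
    linear_combination this
  have htr : a + d ≠ 0 := by
    intro h0
    have hd : d = -a := by linear_combination h0
    rw [hd] at hdet
    have : (2:ℂ) = 0 := by linear_combination -e00 - hdet
    norm_num at this
  have hb : b = 0 := by rcases mul_eq_zero.mp e01 with h' | h'; exact h'; exact absurd h' htr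
  have hc : c = 0 := by rcases mul_eq_zero.mp e10 with h' | h'; exact h'; exact absurd h' htr
  rw [hb, hc] at hdet e00 hM
  have ha : a = 1 ∨ a = -1 := mul_self_eq_one_iff.mp (by linear_combination e00)
  rcases ha with ha | ha <;> rw [ha] at hdet hM
  · left
    have hd : d = 1 := by linear_combination hdet
    rw [hd] at hM
    rw [hM, Matrix.one_fin_two]
  · right
    have hd : d = -1 := by linear_combination -hdet
    rw [hd] at hM
    rw [hM]
    ext i j; fin_cases i <;> fin_cases j <;> simp [Matrix.one_apply]

lemma order_three (D : SL2C)
    (h3 : (D : Matrix (Fin 2) (Fin 2) ℂ) * D * D = 1 ∨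
          (D : Matrix (Fin 2) (Fin 2) ℂ) * D * D = -1)
    (hn1 : (D : Matrix (Fin 2) (Fin 2) ℂ) ≠ 1) (hn2 : (D : Matrix (Fin 2) (Fin 2) ℂ) ≠ -1) :
    ∃ E : SL2C, projPSL E = projPSL D ∧ Matrix.trace (E : Matrix (Fin 2) (Fin 2) ℂ) = 1 := by
  obtain ⟨ε, hε, hcube⟩ : ∃ ε : ℂ, (ε = 1 ∨ ε = -1) ∧
      (D : Matrix (Fin 2) (Fin 2) ℂ) * D * D = ε • 1 := by
    rcases h3 with h | h
    · exact ⟨1, Or.inl rfl, by simpa using h⟩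
    · exact ⟨-1, Or.inr rfl, by rw [h]; ext i j; simp⟩
  obtain ⟨a, b, c, d, hM⟩ : ∃ a b c d, (D : Matrix (Fin 2) (Fin 2) ℂ) = !![a,b;c,d] :=
    ⟨_, _, _, _, Matrix.eta_fin_two _⟩
  have hdet : a * d - b * c = 1 := by
    have := D.2; rw [hM, Matrix.det_fin_two_of] at this; linear_combination this
  rw [hM] at hcube
  have e00 : a*((a+d)*(a+d) - 1) = ε + (a+d) := by
    have := entry_eq hcube 0 0
    simp [Matrix.mul_apply, Fin.sum_univ_two, Matrix.one_apply] at this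
    linear_combination this + (2*a+d)*hdet
  have e11 : d*((a+d)*(a+d) - 1) = ε + (a+d) := by
    have := entry_eq hcube 1 1
    simp [Matrix.mul_apply, Fin.sum_univ_two, Matrix.one_apply] at this
    linear_combination this + (2*d+a)*hdet
  have e01 : b*((a+d)*(a+d) - 1) = 0 := by
    have := entry_eq hcube 0 1
    simp [Matrix.mul_apply, Fin.sum_univ_two, Matrix.one_apply] at this
    linear_combination this + b*hdet
  have e10 : c*((a+d)*(a+d) - 1) = 0 := by
    have := entry_eq hcube 1 0
    simp [Matrix.mul_apply, Fin.sum_univ_two, Matrix.one_apply] at this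
    linear_combination this + c*hdet
  by_cases hu : (a+d)*(a+d) - 1 = 0
  · have htε : ε + (a+d) = 0 := by linear_combination a*hu - e00
    rcases hε with hε | hε
    · have hdetneg : (-(D : Matrix (Fin 2) (Fin 2) ℂ)).det = 1 := by
        rw [Matrix.det_neg]; simp [D.2]
      refine ⟨⟨-(D : Matrix (Fin 2) (Fin 2) ℂ), hdetneg⟩, ?_, ?_⟩
      · exact (projPSL_eq_iff _ _).mpr (Or.inr rfl)
      · show Matrix.trace (-(D : Matrix (Fin 2) (Fin 2) ℂ)) = 1
        rw [hM]
        show Matrix.trace (-(!![a,b;c,d])) = 1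
        rw [Matrix.trace_neg, Matrix.trace_fin_two_of]
        rw [hε] at htε
        linear_combination -htε
    · refine ⟨D, rfl, ?_⟩
      rw [hM, Matrix.trace_fin_two_of]
      rw [hε] at htε
      linear_combination htε
  · have hb : b = 0 := by rcases mul_eq_zero.mp e01 with h' | h'; exact h'; exact absurd h' hu
    have hc : c = 0 := by rcases mul_eq_zero.mp e10 with h' | h'; exact h'; exact absurd h' hu
    have had : a = d := by
      have : (a - d) * ((a+d)*(a+d) - 1) = 0 := by linear_combination e00 - e11
      rcases mul_eq_zero.mp this with h' | h'
      · linear_combination h'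
      · exact absurd h' hu
    rw [hb, hc, ← had] at hdet hM
    have ha : a = 1 ∨ a = -1 := mul_self_eq_one_iff.mp (by linear_combination hdet)
    rcases ha with ha | ha <;> rw [ha] at hM
    · exact absurd (by rw [hM, Matrix.one_fin_two]) hn1
    · refine absurd ?_ hn2
      rw [hM]
      ext i j; fin_cases i <;> fin_cases j <;> simp [Matrix.one_apply]

/-- the nontrivial diagonal element used to contradict irreducibility -/
noncomputable def Kel : SL2C :=
  ⟨!![(2:ℂ), 0; 0, (2:ℂ)⁻¹], by norm_num [Matrix.det_fin_two_of]⟩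

lemma Kel_ne_one : projPSL Kel ≠ 1 := by
  intro h
  rw [projPSL_eq_one_iff] at h
  rcases h with h | h
  · have := entry_eq (show (Kel : Matrix (Fin 2) (Fin 2) ℂ) = 1 from h) 0 0
    simp [Kel, Matrix.one_apply] at this
  · have := entry_eq (show (Kel : Matrix (Fin 2) (Fin 2) ℂ) = -1 from h) 0 0
    simp [Kel, Matrix.one_apply] at this
    norm_num at this

set_option maxHeartbeats 2000000 in
/-- Every irreducible `PSL(2,ℂ)`-representation of `ℤ/2 * ℤ/3 = ⟨c,d | c², d³⟩` is
conjugate to one of the representations `ρ_z` with `ρ_z(c) = ±[[i,0],[0,-i]]` and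
`ρ_z(d) = ±[[z,1],[z(1-z)-1,1-z]]` for some `z ∈ ℂ`; for these,
`trace(ρ_z(cd))² = -(2z-1)²`, so `χ ↦ trace²(cd) - 4` is a degree-two polynomial
function of `z`. -/
theorem irreducible_reps_of_Z2_free_Z3 (ρ : PresentedGroup relsZ2Z3 →* PSL2C')
    (hirr : ∀ A : PSL2C', (∀ g, A * ρ g = ρ g * A) → A = 1) :
    (∃ z : ℂ, ∃ P : PSL2C',
      ρ (PresentedGroup.of 0) = P * projPSL Cel * P⁻¹ ∧
      ρ (PresentedGroup.of 1) = P * projPSL (Del z) * P⁻¹) ∧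
    (∀ z : ℂ,
      (Matrix.trace ((Cel : Matrix (Fin 2) (Fin 2) ℂ) * (Del z : Matrix (Fin 2) (Fin 2) ℂ))) ^ 2
        = -(2 * z - 1) ^ 2) ∧
    (∃ p : Polynomial ℂ, p.degree = 2 ∧ ∀ z : ℂ,
      (Matrix.trace ((Cel : Matrix (Fin 2) (Fin 2) ℂ) * (Del z : Matrix (Fin 2) (Fin 2) ℂ))) ^ 2
        - 4 = p.eval z) := by
  have part2 : ∀ z : ℂ,
      (Matrix.trace ((Cel : Matrix (Fin 2) (Fin 2) ℂ) * (Del z : Matrix (Fin 2) (Fin 2) ℂ))) ^ 2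
        = -(2 * z - 1) ^ 2 := by
    intro z
    simp [Cel, Del, Matrix.trace_fin_two, Matrix.mul_apply, Fin.sum_univ_two]
    ring_nf
    simp [Complex.I_sq]
    ring
  refine ⟨?_, part2, ?_⟩
  · -- the classification
    classical
    have rel_c : (PresentedGroup.of (0 : Fin 2) : PresentedGroup relsZ2Z3) ^ 2 = 1 := by
      have hmem : ((FreeGroup.of (0 : Fin 2)) ^ 2) ∈ Subgroup.normalClosure relsZ2Z3 :=
        Subgroup.subset_normalClosure (Set.mem_insert _ _)
      have h1 : PresentedGroup.mk relsZ2Z3 ((FreeGroup.of 0) ^ 2) = 1 :=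
        (QuotientGroup.eq_one_iff _).mpr hmem
      rw [_root_.map_pow] at h1
      exact h1
    have rel_d : (PresentedGroup.of (1 : Fin 2) : PresentedGroup relsZ2Z3) ^ 3 = 1 := by
      have hmem : ((FreeGroup.of (1 : Fin 2)) ^ 3) ∈ Subgroup.normalClosure relsZ2Z3 :=
        Subgroup.subset_normalClosure (Set.mem_insert_of_mem _ rfl)
      have h1 : PresentedGroup.mk relsZ2Z3 ((FreeGroup.of 1) ^ 3) = 1 :=
        (QuotientGroup.eq_one_iff _).mpr hmem
      rw [_root_.map_pow] at h1
      exact h1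
    set γ := ρ (PresentedGroup.of 0) with hγdef
    set δ := ρ (PresentedGroup.of 1) with hδdef
    have hγ2 : γ ^ 2 = 1 := by rw [hγdef, ← _root_.map_pow, rel_c, _root_.map_one]
    have hδ3 : δ ^ 3 = 1 := by rw [hδdef, ← _root_.map_pow, rel_d, _root_.map_one]
    have hA : ∀ A : PSL2C', A * γ = γ * A → A * δ = δ * A → A = 1 := by
      intro A h0 h1
      apply hirr
      intro g
      let S : Subgroup (PresentedGroup relsZ2Z3) :=
        { carrier := {x | A * ρ x = ρ x * A}
          one_mem' := by simp
          mul_mem' := by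
            intro x y hx hy
            simp only [Set.mem_setOf_eq, _root_.map_mul] at *
            rw [← mul_assoc, hx, mul_assoc, hy, mul_assoc]
          inv_mem' := by
            intro x hx
            simp only [Set.mem_setOf_eq, _root_.map_inv] at *
            exact (Commute.inv_right hx : _) }
      exact PresentedGroup.generated_by relsZ2Z3 S (fun j => by fin_cases j <;> assumption) g
    have hγ1 : γ ≠ 1 := by
      intro h
      by_cases hδ : δ = 1
      · exact Kel_ne_one
          (hA (projPSL Kel) (by rw [h, mul_one, one_mul]) (by rw [hδ, mul_one, one_mul]))
      · exact hδ (hA δ (by rw [h, mul_one, one_mul]) rfl)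
    have hδ1 : δ ≠ 1 := by
      intro h
      exact hγ1 (hA γ rfl (by rw [h, mul_one, one_mul]))
    obtain ⟨C₀, hC0'⟩ := QuotientGroup.mk'_surjective (Subgroup.center SL2C) γ
    have hC0 : projPSL C₀ = γ := hC0'
    have hC0sq : projPSL (C₀ ^ 2) = 1 := by rw [_root_.map_pow, hC0, hγ2]
    have hC0sq' : (C₀ : Matrix (Fin 2) (Fin 2) ℂ) * C₀ = 1 ∨
        (C₀ : Matrix (Fin 2) (Fin 2) ℂ) * C₀ = -1 := by
      have h := (projPSL_eq_one_iff _).mp hC0sq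
      have hcoe : ((C₀^2 : SL2C) : Matrix (Fin 2) (Fin 2) ℂ)
          = (C₀ : Matrix (Fin 2) (Fin 2) ℂ) * C₀ := by rw [pow_two]; rfl
      rwa [hcoe] at h
    have hCne1 : (C₀ : Matrix (Fin 2) (Fin 2) ℂ) ≠ 1 := by
      intro h; exact hγ1 (hC0 ▸ (projPSL_eq_one_iff C₀).mpr (Or.inl h))
    have hCne2 : (C₀ : Matrix (Fin 2) (Fin 2) ℂ) ≠ -1 := by
      intro h; exact hγ1 (hC0 ▸ (projPSL_eq_one_iff C₀).mpr (Or.inr h))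
    have hsq : (C₀ : Matrix (Fin 2) (Fin 2) ℂ) * C₀ = -1 := by
      rcases hC0sq' with h | h
      · rcases sq_one C₀ h with h1 | h1
        · exact absurd h1 hCne1
        · exact absurd h1 hCne2
      · exact h
    obtain ⟨Q, hQ⟩ := order_two_conj C₀ hsq
    obtain ⟨D₀, hD0'⟩ := QuotientGroup.mk'_surjective (Subgroup.center SL2C) δ
    have hD0 : projPSL D₀ = δ := hD0'
    set D₁ : SL2C := Q⁻¹ * D₀ * Q with hD1def
    have hD1p : projPSL D₁ = (projPSL Q)⁻¹ * δ * projPSL Q := by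
      rw [hD1def, _root_.map_mul, _root_.map_mul, _root_.map_inv, hD0]
    have hδQ : δ = projPSL Q * projPSL D₁ * (projPSL Q)⁻¹ := by rw [hD1p]; group
    have hγQ : γ = projPSL Q * projPSL Cel * (projPSL Q)⁻¹ := by
      rw [← hC0, hQ, _root_.map_mul, _root_.map_mul, _root_.map_inv]
    have hD1cube : projPSL (D₁ ^ 3) = 1 := by
      rw [_root_.map_pow, hD1p]
      calc ((projPSL Q)⁻¹ * δ * projPSL Q)^3
          = ((projPSL Q)⁻¹ * δ * ((projPSL Q)⁻¹)⁻¹)^3 := by rw [inv_inv]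
        _ = (projPSL Q)⁻¹ * δ^3 * ((projPSL Q)⁻¹)⁻¹ := by rw [conj_pow]
        _ = 1 := by rw [hδ3, inv_inv]; group
    have hD1cube' : (D₁ : Matrix (Fin 2) (Fin 2) ℂ) * D₁ * D₁ = 1 ∨
        (D₁ : Matrix (Fin 2) (Fin 2) ℂ) * D₁ * D₁ = -1 := by
      have h := (projPSL_eq_one_iff _).mp hD1cube
      have hcoe : ((D₁^3 : SL2C) : Matrix (Fin 2) (Fin 2) ℂ)
          = (D₁ : Matrix (Fin 2) (Fin 2) ℂ) * D₁ * D₁ := by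
        rw [pow_succ, pow_two]; rfl
      rwa [hcoe] at h
    have hD1ne : projPSL D₁ ≠ 1 := by
      rw [hD1p]
      intro h
      apply hδ1
      have h2 : projPSL Q * ((projPSL Q)⁻¹ * δ * projPSL Q) * (projPSL Q)⁻¹
          = projPSL Q * 1 * (projPSL Q)⁻¹ := by rw [h]
      calc δ = projPSL Q * ((projPSL Q)⁻¹ * δ * projPSL Q) * (projPSL Q)⁻¹ := by group
        _ = projPSL Q * 1 * (projPSL Q)⁻¹ := h2
        _ = 1 := by group
    have hD1ne1 : (D₁ : Matrix (Fin 2) (Fin 2) ℂ) ≠ 1 := by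
      intro h; exact hD1ne ((projPSL_eq_one_iff D₁).mpr (Or.inl h))
    have hD1ne2 : (D₁ : Matrix (Fin 2) (Fin 2) ℂ) ≠ -1 := by
      intro h; exact hD1ne ((projPSL_eq_one_iff D₁).mpr (Or.inr h))
    obtain ⟨E, hEp, hEtr⟩ := order_three D₁ hD1cube' hD1ne1 hD1ne2
    have hcomm' : ∀ B : PSL2C', B * projPSL Cel = projPSL Cel * B →
        B * projPSL E = projPSL E * B → B = 1 := by
      intro B h1 h2
      have key : projPSL Q * B * (projPSL Q)⁻¹ = 1 := by
        apply hA
        · rw [hγQ]; exact conj_comm_of_comm _ _ _ h1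
        · rw [hδQ, ← hEp]; exact conj_comm_of_comm _ _ _ h2
      calc B = (projPSL Q)⁻¹ * (projPSL Q * B * (projPSL Q)⁻¹) * projPSL Q := by group
        _ = 1 := by rw [key]; group
    obtain ⟨a, b, c, d, hME⟩ : ∃ a b c d, (E : Matrix (Fin 2) (Fin 2) ℂ) = !![a,b;c,d] :=
      ⟨_, _, _, _, Matrix.eta_fin_two _⟩
    have hdetE : a*d - b*c = 1 := by
      have := E.2; rw [hME, Matrix.det_fin_two_of] at this; linear_combination this
    have htrE : a + d = 1 := by rw [hME, Matrix.trace_fin_two_of] at hEtr; exact hEtr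
    by_cases hb : b ≠ 0
    · -- upper-right entry nonzero
      obtain ⟨s, hs⟩ : ∃ s : ℂ, s * s = b := by
        obtain ⟨s, hs⟩ := IsAlgClosed.exists_pow_nat_eq b (n := 2) (by norm_num)
        exact ⟨s, by rw [← sq]; exact hs⟩
      have hsne : s ≠ 0 := by intro h; rw [h] at hs; simp at hs; exact hb hs.symm
      obtain ⟨s', hss'⟩ : ∃ s' : ℂ, s * s' = 1 := ⟨s⁻¹, mul_inv_cancel₀ hsne⟩
      have hdT : (!![s, 0; 0, s'] : Matrix (Fin 2) (Fin 2) ℂ).det = 1 := by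
        rw [Matrix.det_fin_two_of]; linear_combination hss'
      set T : SL2C := ⟨!![s, 0; 0, s'], hdT⟩ with hT
      have hTC : T * Cel = Cel * T := by
        apply Subtype.ext
        show (!![s, 0; 0, s'] : Matrix (Fin 2) (Fin 2) ℂ) * !![Complex.I, 0; 0, -Complex.I]
          = !![Complex.I, 0; 0, -Complex.I] * !![s, 0; 0, s']
        ext i j
        fin_cases i <;> fin_cases j <;> simp [Matrix.mul_apply, Fin.sum_univ_two] <;> ring
      have hbc : a*(1-a) - 1 = b*c := by linear_combination hdetE - a*htrE
      have hTE : T * Del a = E * T := by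
        apply Subtype.ext
        show (!![s, 0; 0, s'] : Matrix (Fin 2) (Fin 2) ℂ) * !![a, 1; a*(1-a)-1, 1-a]
          = (E : Matrix (Fin 2) (Fin 2) ℂ) * !![s, 0; 0, s']
        rw [hME]
        ext i j
        fin_cases i <;> fin_cases j
        · simp [Matrix.mul_apply, Fin.sum_univ_two]; ring
        · simp [Matrix.mul_apply, Fin.sum_univ_two]
          linear_combination s'*hs - s*hss'
        · simp [Matrix.mul_apply, Fin.sum_univ_two]
          linear_combination s'*hbc - c*(s'*hs - s*hss')
        · simp [Matrix.mul_apply, Fin.sum_univ_two]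
          linear_combination -s'*htrE
      have hpE : projPSL E = projPSL T * projPSL (Del a) * (projPSL T)⁻¹ := by
        have hE_eq : E = T * Del a * T⁻¹ := by rw [hTE]; group
        rw [hE_eq, _root_.map_mul, _root_.map_mul, _root_.map_inv]
      have hpTC : projPSL T * projPSL Cel = projPSL Cel * projPSL T := by
        rw [← _root_.map_mul, hTC, _root_.map_mul]
      refine ⟨a, projPSL Q * projPSL T, ?_, ?_⟩
      · calc γ = projPSL Q * projPSL Cel * (projPSL Q)⁻¹ := hγQ
          _ = projPSL Q * (projPSL T * projPSL Cel * (projPSL T)⁻¹) * (projPSL Q)⁻¹ := by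
              rw [show projPSL T * projPSL Cel * (projPSL T)⁻¹ = projPSL Cel by
                rw [hpTC]; group]
          _ = (projPSL Q * projPSL T) * projPSL Cel * (projPSL Q * projPSL T)⁻¹ := by group
      · calc δ = projPSL Q * projPSL D₁ * (projPSL Q)⁻¹ := hδQ
          _ = projPSL Q * (projPSL T * projPSL (Del a) * (projPSL T)⁻¹) * (projPSL Q)⁻¹ := by
              rw [← hEp, hpE]
          _ = (projPSL Q * projPSL T) * projPSL (Del a) * (projPSL Q * projPSL T)⁻¹ := by group
    · push_neg at hb
      rw [hb] at hdetE hME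
      by_cases hc : c ≠ 0
      · -- lower-left entry nonzero: flip with W
        have hdW : (!![(0:ℂ), 1; -1, 0] : Matrix (Fin 2) (Fin 2) ℂ).det = 1 := by
          simp [Matrix.det_fin_two_of]
        set W : SL2C := ⟨!![(0:ℂ), 1; -1, 0], hdW⟩ with hW
        have hdE' : (!![d, -c; 0, a] : Matrix (Fin 2) (Fin 2) ℂ).det = 1 := by
          rw [Matrix.det_fin_two_of]; linear_combination hdetE
        set E' : SL2C := ⟨!![d, -c; 0, a], hdE'⟩ with hE'
        have hWE : W * E = E' * W := by
          apply Subtype.ext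
          show (!![(0:ℂ), 1; -1, 0] : Matrix (Fin 2) (Fin 2) ℂ) * (E : Matrix (Fin 2) (Fin 2) ℂ)
            = !![d, -c; 0, a] * !![(0:ℂ), 1; -1, 0]
          rw [hME]
          ext i j
          fin_cases i <;> fin_cases j <;> simp [Matrix.mul_apply, Fin.sum_univ_two]
        have hpWC : projPSL W * projPSL Cel = projPSL Cel * projPSL W := by
          rw [← _root_.map_mul, ← _root_.map_mul, projPSL_eq_iff]
          right
          show ((W * Cel : SL2C) : Matrix (Fin 2) (Fin 2) ℂ)
            = -((Cel * W : SL2C) : Matrix (Fin 2) (Fin 2) ℂ)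
          show (!![(0:ℂ), 1; -1, 0] : Matrix (Fin 2) (Fin 2) ℂ) * !![Complex.I, 0; 0, -Complex.I]
            = -(!![Complex.I, 0; 0, -Complex.I] * !![(0:ℂ), 1; -1, 0])
          ext i j
          fin_cases i <;> fin_cases j <;> simp [Matrix.mul_apply, Fin.sum_univ_two]
        obtain ⟨s, hs⟩ : ∃ s : ℂ, s * s = -c := by
          obtain ⟨s, hs⟩ := IsAlgClosed.exists_pow_nat_eq (-c) (n := 2) (by norm_num)
          exact ⟨s, by rw [← sq]; exact hs⟩
        have hsne : s ≠ 0 := by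
          intro h; rw [h] at hs; simp at hs
          exact hc hs
        obtain ⟨s', hss'⟩ : ∃ s' : ℂ, s * s' = 1 := ⟨s⁻¹, mul_inv_cancel₀ hsne⟩
        have hdT : (!![s, 0; 0, s'] : Matrix (Fin 2) (Fin 2) ℂ).det = 1 := by
          rw [Matrix.det_fin_two_of]; linear_combination hss'
        set T : SL2C := ⟨!![s, 0; 0, s'], hdT⟩ with hT
        have hTC : T * Cel = Cel * T := by
          apply Subtype.ext
          show (!![s, 0; 0, s'] : Matrix (Fin 2) (Fin 2) ℂ) * !![Complex.I, 0; 0, -Complex.I]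
            = !![Complex.I, 0; 0, -Complex.I] * !![s, 0; 0, s']
          ext i j
          fin_cases i <;> fin_cases j <;> simp [Matrix.mul_apply, Fin.sum_univ_two] <;> ring
        have hTE' : T * Del d = E' * T := by
          apply Subtype.ext
          show (!![s, 0; 0, s'] : Matrix (Fin 2) (Fin 2) ℂ) * !![d, 1; d*(1-d)-1, 1-d]
            = !![d, -c; 0, a] * !![s, 0; 0, s']
          ext i j
          fin_cases i <;> fin_cases j
          · simp [Matrix.mul_apply, Fin.sum_univ_two]; ring
          · simp [Matrix.mul_apply, Fin.sum_univ_two]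
            linear_combination s'*hs - s*hss'
          · simp [Matrix.mul_apply, Fin.sum_univ_two]
            right
            linear_combination hdetE - d*htrE
          · simp [Matrix.mul_apply, Fin.sum_univ_two]
            linear_combination -s'*htrE
        have hpE' : projPSL E' = projPSL T * projPSL (Del d) * (projPSL T)⁻¹ := by
          have hE'_eq : E' = T * Del d * T⁻¹ := by rw [hTE']; group
          rw [hE'_eq, _root_.map_mul, _root_.map_mul, _root_.map_inv]
        have hpEE : projPSL E = (projPSL W)⁻¹ * projPSL E' * projPSL W := by
          have hE_eq : E = W⁻¹ * E' * W := by
            calc E = W⁻¹ * (W * E) := by group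
              _ = W⁻¹ * (E' * W) := by rw [hWE]
              _ = W⁻¹ * E' * W := by group
          rw [hE_eq, _root_.map_mul, _root_.map_mul, _root_.map_inv]
        have hpTC : projPSL T * projPSL Cel = projPSL Cel * projPSL T := by
          rw [← _root_.map_mul, hTC, _root_.map_mul]
        refine ⟨d, projPSL Q * (projPSL W)⁻¹ * projPSL T, ?_, ?_⟩
        · calc γ = projPSL Q * projPSL Cel * (projPSL Q)⁻¹ := hγQ
            _ = projPSL Q * ((projPSL W)⁻¹ * projPSL Cel * projPSL W) * (projPSL Q)⁻¹ := by
                rw [show (projPSL W)⁻¹ * projPSL Cel * projPSL W = projPSL Cel by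
                  rw [show (projPSL W)⁻¹ * projPSL Cel * projPSL W
                      = (projPSL W)⁻¹ * (projPSL Cel * projPSL W) by group,
                    ← hpWC]
                  group]
            _ = projPSL Q * ((projPSL W)⁻¹ *
                  (projPSL T * projPSL Cel * (projPSL T)⁻¹) * projPSL W) * (projPSL Q)⁻¹ := by
                rw [show projPSL T * projPSL Cel * (projPSL T)⁻¹ = projPSL Cel by
                  rw [hpTC]; group]
            _ = (projPSL Q * (projPSL W)⁻¹ * projPSL T) * projPSL Cel
                  * (projPSL Q * (projPSL W)⁻¹ * projPSL T)⁻¹ := by group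
        · calc δ = projPSL Q * projPSL D₁ * (projPSL Q)⁻¹ := hδQ
            _ = projPSL Q * ((projPSL W)⁻¹ *
                  (projPSL T * projPSL (Del d) * (projPSL T)⁻¹) * projPSL W) * (projPSL Q)⁻¹ := by
                rw [← hEp, hpEE, hpE']
            _ = (projPSL Q * (projPSL W)⁻¹ * projPSL T) * projPSL (Del d)
                  * (projPSL Q * (projPSL W)⁻¹ * projPSL T)⁻¹ := by group
      · -- both off-diagonal entries vanish: contradiction with irreducibility
        push_neg at hc
        rw [hc] at hME
        have hKC : Kel * Cel = Cel * Kel := by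
          apply Subtype.ext
          show (!![(2:ℂ), 0; 0, (2:ℂ)⁻¹] : Matrix (Fin 2) (Fin 2) ℂ) * !![Complex.I, 0; 0, -Complex.I]
            = !![Complex.I, 0; 0, -Complex.I] * !![(2:ℂ), 0; 0, (2:ℂ)⁻¹]
          ext i j
          fin_cases i <;> fin_cases j <;> simp [Matrix.mul_apply, Fin.sum_univ_two] <;> ring
        have hKE : Kel * E = E * Kel := by
          apply Subtype.ext
          show (!![(2:ℂ), 0; 0, (2:ℂ)⁻¹] : Matrix (Fin 2) (Fin 2) ℂ) * (E : Matrix (Fin 2) (Fin 2) ℂ)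
            = (E : Matrix (Fin 2) (Fin 2) ℂ) * !![(2:ℂ), 0; 0, (2:ℂ)⁻¹]
          rw [hME]
          ext i j
          fin_cases i <;> fin_cases j <;> simp [Matrix.mul_apply, Fin.sum_univ_two] <;> ring
        exact absurd (hcomm' (projPSL Kel) (by rw [← _root_.map_mul, hKC, _root_.map_mul])
          (by rw [← _root_.map_mul, hKE, _root_.map_mul])) Kel_ne_one
  · refine ⟨Polynomial.C (-4) * Polynomial.X^2 + Polynomial.C 4 * Polynomial.X
      + Polynomial.C (-5), ?_, ?_⟩
    · apply Polynomial.degree_quadratic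
      norm_num
    · intro z
      rw [part2 z]
      simp
      ring
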